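/- Let $0 \le \alpha \le \beta \le 1$, $p \in \mathbb{N}^*$, and let $\mathcal{A} \in L^\infty(\alpha,\beta)$ with $\mathcal{A}' \in L^2(\alpha,\beta)$. Let $(Z(\alpha, t))_{t \in [\alpha,\beta]}$ be a family of random variables of the form $Z(\alpha, t, \omega) = \frac{1}{\sqrt{\varepsilon}}\int_\alpha^t g(s,\omega)\,ds$ for some bounded measurable $g$, satisfying the moment bound $\mathbb{E}[Z(\alpha,t)^{2p}] \le C_p[(t-\alpha)^p + \varepsilon^{(p-1)/2}]$ for all $t \in [\alpha,\beta]$. Then the random variable $\bar{Z} = \frac{1}{\sqrt{\varepsilon}}\int_\alpha^\beta \mathcal{A}(t)g(t,\omega)\,dt$ satisfies $\mathbb{E}[\bar{Z}^{2p}] \le C'_p[(\beta-\alpha)^p + \varepsilon^{(p-1)/2}][\|\mathcal{A}\|_{L^\infty(\alpha,\beta)}^{2p} + (\beta-\alpha)^p\|\mathcal{A}'\|_{L^2(\alpha,\beta)}^{2p}]$, where $C'_p$ depends only on $p$ and $C_p$. -/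

import Mathlib

open MeasureTheory ProbabilityTheory intervalIntegral

lemma helper1 (x y : ℝ) (p : ℕ) : (x - y) ^ (2*p) ≤ 2^(2*p) * (x^(2*p) + y^(2*p)) := by
  have h1 : |x - y| ≤ 2 * max |x| |y| := by
    calc |x - y| ≤ |x| + |y| := abs_sub _ _
    _ ≤ 2 * max |x| |y| := by
      rcases le_total |x| |y| with h | h <;> simp [max_eq_right, max_eq_left, h] <;>
        nlinarith [abs_nonneg x, abs_nonneg y]
  have h2 : (x - y)^(2*p) = |x - y|^(2*p) := by
    rw [← abs_pow, abs_of_nonneg ((even_two_mul p).pow_nonneg _)]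
  rw [h2]
  calc |x - y|^(2*p) ≤ (2 * max |x| |y|)^(2*p) := pow_le_pow_left₀ (abs_nonneg _) h1 _
  _ = 2^(2*p) * (max |x| |y|)^(2*p) := mul_pow _ _ _
  _ ≤ 2^(2*p) * (x^(2*p) + y^(2*p)) := by
      gcongr 2^(2*p) * ?_
      rcases le_total |x| |y| with h | h
      · rw [max_eq_right h]
        calc |y|^(2*p) = y^(2*p) := by
              rw [← abs_pow, abs_of_nonneg ((even_two_mul p).pow_nonneg _)]
        _ ≤ x^(2*p) + y^(2*p) := le_add_of_nonneg_left ((even_two_mul p).pow_nonneg _)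
      · rw [max_eq_left h]
        calc |x|^(2*p) = x^(2*p) := by
              rw [← abs_pow, abs_of_nonneg ((even_two_mul p).pow_nonneg _)]
        _ ≤ x^(2*p) + y^(2*p) := le_add_of_nonneg_right ((even_two_mul p).pow_nonneg _)

lemma helper_holder {X : Type*} [MeasurableSpace X] (μ : Measure X) [IsFiniteMeasure μ]
    (f : X → ℝ) (hf : AEStronglyMeasurable f μ) (C : ℝ) (hb : ∀ᵐ x ∂μ, |f x| ≤ C)
    (h0 : ∀ x, 0 ≤ f x) (p : ℕ) (hp : 1 ≤ p) :
    (∫ x, f x ∂μ) ^ p ≤ (μ Set.univ).toReal ^ (p-1) * ∫ x, f x ^ p ∂μ := by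
  rcases eq_or_lt_of_le hp with h1 | h1
  · simp [← h1]
  have hp1 : (1:ℝ) < p := by exact_mod_cast h1
  have hpq : Real.HolderConjugate p (p / (p - 1)) := Real.HolderConjugate.conjExponent hp1
  have hfp : MemLp f (ENNReal.ofReal p) μ := MemLp.of_bound hf C (by
    filter_upwards [hb] with x hx
    simpa [Real.norm_eq_abs] using hx)
  have hone : MemLp (fun _ : X => (1:ℝ)) (ENNReal.ofReal (p / (p-1))) μ := memLp_const 1
  have key := MeasureTheory.integral_mul_le_Lp_mul_Lq_of_nonneg hpq (μ := μ) (f := f) (g := fun _ => 1)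
    (.of_forall h0) (.of_forall fun _ => zero_le_one) hfp hone
  simp only [mul_one, Real.one_rpow] at key
  have hrw : (∫ x, f x ^ (p:ℝ) ∂μ) = ∫ x, f x ^ p ∂μ := by
    congr 1; funext x; rw [← Real.rpow_natCast (f x) p]
  rw [hrw, MeasureTheory.integral_const, measureReal_def, smul_eq_mul, mul_one] at key
  set I := ∫ x, f x ^ p ∂μ with hI
  set m := (μ Set.univ).toReal with hm
  have hI0 : 0 ≤ I := MeasureTheory.integral_nonneg fun x => pow_nonneg (h0 x) p
  have hm0 : 0 ≤ m := ENNReal.toReal_nonneg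
  have hint0 : 0 ≤ ∫ x, f x ∂μ := MeasureTheory.integral_nonneg h0
  calc (∫ x, f x ∂μ) ^ p ≤ (I ^ (1/(p:ℝ)) * m ^ (1/(p/(p-1):ℝ))) ^ p :=
        pow_le_pow_left₀ hint0 key p
  _ = m ^ (p-1) * I := by
      rw [mul_pow, ← Real.rpow_natCast (I ^ (1/(p:ℝ))) p, ← Real.rpow_natCast (m ^ _) p,
        ← Real.rpow_mul hI0, ← Real.rpow_mul hm0]
      have hpne : (p:ℝ) ≠ 0 := by positivity
      have e1 : (1/(p:ℝ)) * p = 1 := by field_simp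
      have e2 : (1/((p:ℝ)/((p:ℝ)-1))) * p = (p:ℝ) - 1 := by field_simp
      rw [e1, e2, Real.rpow_one]
      have e3 : m ^ ((p:ℝ)-1) = m ^ (p-1 : ℕ) := by
        rw [← Real.rpow_natCast m (p-1)]
        congr 1
        have h : (1:ℕ) ≤ p := hp
        push_cast [Nat.cast_sub h]
        ring
      rw [e3, mul_comm]


/-- Integration-by-parts transfer of moment bounds: if the antiderivative process
`Z(α,t) = ε^{-1/2} ∫_α^t g` satisfies `𝔼[Z(α,t)^{2p}] ≤ C_p[(t-α)^p + ε^{(p-1)/2}]`, then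
`Z̄ = ε^{-1/2} ∫_α^β 𝒜 g` satisfies
`𝔼[Z̄^{2p}] ≤ C'_p[(β-α)^p + ε^{(p-1)/2}][‖𝒜‖_∞^{2p} + (β-α)^p ‖𝒜'‖_{L²}^{2p}]`,
with `C'_p` depending only on `p` and `C_p`. -/
theorem stmt11 (p : ℕ) (hp : 1 ≤ p) (Cp : ℝ) (hCp : 0 ≤ Cp) :
    ∃ C' : ℝ, 0 < C' ∧
    ∀ (Ω : Type) (_ : MeasureSpace Ω), IsProbabilityMeasure (ℙ : Measure Ω) →
    ∀ (α β ε : ℝ), 0 ≤ α → α ≤ β → β ≤ 1 → 0 < ε →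
    ∀ (A A' : ℝ → ℝ),
      (∀ t ∈ Set.Icc α β, HasDerivAt A (A' t) t) →
      MemLp A' 2 (volume.restrict (Set.Ioo α β)) →
    ∀ (g : ℝ → Ω → ℝ), Measurable (Function.uncurry g) →
      (∃ Mg : ℝ, ∀ t ω, |g t ω| ≤ Mg) →
      -- moment bound on the antiderivative process
      (∀ t ∈ Set.Icc α β,
        ∫ ω, ((Real.sqrt ε)⁻¹ * ∫ s in α..t, g s ω) ^ (2 * p) ≤
          Cp * ((t - α) ^ p + ε ^ (((p : ℝ) - 1) / 2))) →
      ∫ ω, ((Real.sqrt ε)⁻¹ * ∫ t in α..β, A t * g t ω) ^ (2 * p) ≤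
        C' * ((β - α) ^ p + ε ^ (((p : ℝ) - 1) / 2)) *
          ((sSup ((fun t => |A t|) '' Set.Icc α β)) ^ (2 * p) +
            (β - α) ^ p * (∫ t in Set.Ioo α β, (A' t) ^ 2) ^ p) := by
  refine ⟨2^(2*p) * (Cp + 1), by positivity, ?_⟩
  intro Ω _ hprob α β ε hα hαβ hβ1 hε A A' hA hA'2 g hg ⟨Mg, hMg⟩ hmom
  set μI := volume.restrict (Set.Ioo α β) with hμI
  haveI hfinI : IsFiniteMeasure μI := by
    constructor
    rw [hμI, Measure.restrict_apply_univ, Real.volume_Ioo]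
    exact ENNReal.ofReal_lt_top
  have hμIuniv : (μI Set.univ).toReal = β - α := by
    rw [hμI, Measure.restrict_apply_univ, Real.volume_Ioo, ENNReal.toReal_ofReal (by linarith)]
  -- bounded g
  set M : ℝ := Mg ⊔ 0 with hMdef
  have hM0 : 0 ≤ M := le_sup_right
  have hM : ∀ t ω, |g t ω| ≤ M := fun t ω => (hMg t ω).trans le_sup_left
  -- sqrt ε
  set r : ℝ := (Real.sqrt ε)⁻¹ with hrdef
  have hr0 : 0 ≤ r := by positivity
  -- the derivative
  set D : ℝ → ℝ := deriv A with hDdef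
  have hDA : ∀ t ∈ Set.Icc α β, D t = A' t := fun t ht => (hA t ht).deriv
  have hDmeas : Measurable D := measurable_deriv A
  -- continuity of A on Icc
  have hAcont : ContinuousOn A (Set.Icc α β) := fun t ht =>
    (hA t ht).continuousAt.continuousWithinAt
  -- sup bound
  set S : ℝ := sSup ((fun t => |A t|) '' Set.Icc α β) with hSdef
  have hSle : ∀ t ∈ Set.Icc α β, |A t| ≤ S := by
    intro t ht
    refine le_csSup ?_ ⟨t, ht, rfl⟩
    exact (isCompact_Icc.image_of_continuousOn (continuous_abs.comp_continuousOn hAcont)).bddAbove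
  have hS0 : 0 ≤ S := le_trans (abs_nonneg (A β)) (hSle β ⟨hαβ, le_refl β⟩)
  -- D in L² and L¹ on Ioo
  have hD2 : MemLp D 2 μI := by
    refine hA'2.ae_eq ?_
    rw [hμI]
    filter_upwards [ae_restrict_mem measurableSet_Ioo] with t ht
    exact (hDA t (Set.Ioo_subset_Icc_self ht)).symm
  have hD1 : Integrable D μI := hD2.integrable (by norm_num)
  have hNN : ∫ t in Set.Ioo α β, (A' t) ^ 2 = ∫ t in Set.Ioo α β, (D t) ^ 2 := by
    refine setIntegral_congr_fun measurableSet_Ioo fun t ht => ?_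
    rw [hDA t (Set.Ioo_subset_Icc_self ht)]
  rw [hNN]
  set NN : ℝ := ∫ t in Set.Ioo α β, (D t) ^ 2 with hNNdef
  have hNN0 : 0 ≤ NN := MeasureTheory.integral_nonneg fun t => sq_nonneg _
  -- FTC
  have hFTC : ∀ t ∈ Set.Icc α β, A β - A t = ∫ u in Set.Ioo t β, D u := by
    have hIoo : IntegrableOn D (Set.Ioo α β) volume := hD1
    intro t ht
    have h1 : IntegrableOn D (Set.Ioo t β) volume :=
      hIoo.mono_set (Set.Ioo_subset_Ioo ht.1 le_rfl)
    have h2 : IntervalIntegrable D volume t β := by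
      rw [intervalIntegrable_iff_integrableOn_Ioo_of_le ht.2]
      exact h1
    have h3 : ∫ u in t..β, D u = A β - A t := by
      refine intervalIntegral.integral_eq_sub_of_hasDerivAt (fun u hu => ?_) h2
      rw [Set.uIcc_of_le ht.2] at hu
      have hu' : u ∈ Set.Icc α β := ⟨le_trans ht.1 hu.1, hu.2⟩
      rw [hDA u hu']
      exact hA u hu'
    rw [← h3, intervalIntegral.integral_of_le ht.2, MeasureTheory.integral_Ioc_eq_integral_Ioo]
  -- the jointly measurable antiderivative
  set ZZ : ℝ × Ω → ℝ := fun q =>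
    ∫ s, Set.indicator {r : (ℝ × Ω) × ℝ | α < r.2 ∧ r.2 ≤ r.1.1}
      (fun r => g r.2 r.1.2) (q, s) with hZZdef
  have hZZsm : StronglyMeasurable ZZ := by
    have hsetm : MeasurableSet {r : (ℝ × Ω) × ℝ | α < r.2 ∧ r.2 ≤ r.1.1} :=
      (measurableSet_lt measurable_const measurable_snd).inter
        (measurableSet_le measurable_snd measurable_fst.fst)
    have hfm : Measurable fun r : (ℝ × Ω) × ℝ => g r.2 r.1.2 :=
      hg.comp (measurable_snd.prodMk measurable_fst.snd)
    exact ((hfm.indicator hsetm).stronglyMeasurable).integral_prod_right'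
  have hZZ : ∀ u, α ≤ u → ∀ ω, ZZ (u, ω) = ∫ s in α..u, g s ω := by
    intro u hu ω
    rw [intervalIntegral.integral_of_le hu, ← MeasureTheory.integral_indicator measurableSet_Ioc]
    refine MeasureTheory.integral_congr_ae (.of_forall fun s => ?_)
    simp [Set.indicator_apply, Set.mem_Ioc, Set.mem_setOf_eq]
  have hZZb : ∀ u ∈ Set.Icc α β, ∀ ω, |ZZ (u, ω)| ≤ M * (β - α) := by
    intro u hu ω
    rw [hZZ u hu.1 ω]
    have h1 : ‖∫ s in α..u, g s ω‖ ≤ M * |u - α| :=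
      intervalIntegral.norm_integral_le_of_norm_le_const fun x _ => by
        rw [Real.norm_eq_abs]; exact hM x ω
    rw [Real.norm_eq_abs, abs_of_nonneg (sub_nonneg.2 hu.1)] at h1
    exact h1.trans (mul_le_mul_of_nonneg_left (by linarith [hu.2]) hM0)
  -- integration by parts, pointwise in ω
  have hIoi : ∀ t ∈ Set.Ioo α β, Set.Ioi t ∩ Set.Ioo α β = Set.Ioo t β := by
    intro t ht
    ext x
    exact ⟨fun ⟨h1, _, h3⟩ => ⟨h1, h3⟩, fun ⟨h1, h2⟩ => ⟨h1, ht.1.trans h1, h2⟩⟩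
  have hIio : ∀ u ∈ Set.Ioo α β, Set.Iio u ∩ Set.Ioo α β = Set.Ioo α u := by
    intro u hu
    ext x
    exact ⟨fun ⟨h1, h2, _⟩ => ⟨h2, h1⟩, fun ⟨h1, h2⟩ => ⟨h2, h1, h2.trans hu.2⟩⟩
  have key : ∀ ω, (∫ t in α..β, A t * g t ω) =
      A β * (∫ t in α..β, g t ω) - ∫ u in Set.Ioo α β, D u * ZZ (u, ω) := by
    intro ω
    have hcm : Measurable (fun t => g t ω) := hg.comp (measurable_id.prodMk measurable_const)
    have hcI : Integrable (fun t => g t ω) μI := by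
      refine MemLp.integrable le_rfl (MemLp.of_bound hcm.aestronglyMeasurable M
        (.of_forall fun t => ?_))
      rw [Real.norm_eq_abs]; exact hM t ω
    have hAc : Integrable (fun t => A t * g t ω) μI := by
      refine MemLp.integrable le_rfl (MemLp.of_bound ?_ (S * M) ?_)
      · exact ((hAcont.mono Set.Ioo_subset_Icc_self).aestronglyMeasurable
          measurableSet_Ioo).mul hcm.aestronglyMeasurable
      · rw [hμI]
        filter_upwards [ae_restrict_mem measurableSet_Ioo] with t ht
        rw [Real.norm_eq_abs, abs_mul]
        exact mul_le_mul (hSle t (Set.Ioo_subset_Icc_self ht)) (hM t ω) (abs_nonneg _) hS0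
    set F : ℝ × ℝ → ℝ := fun q =>
      Set.indicator {q : ℝ × ℝ | q.1 < q.2} (fun q => g q.1 ω * D q.2) q with hFdef
    have hFint : Integrable F (μI.prod μI) :=
      (Integrable.mul_prod hcI hD1).indicator (measurableSet_lt measurable_fst measurable_snd)
    have step3 : ∀ t ∈ Set.Ioo α β, (A β - A t) * g t ω = ∫ u, F (t, u) ∂μI := by
      intro t ht
      have hfe : (fun u => F (t, u)) = fun u => (Set.Ioi t).indicator
          (fun u => g t ω * D u) u := by
        funext u
        rw [hFdef]
        simp [Set.indicator_apply, Set.mem_Ioi, Set.mem_setOf_eq]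
      rw [hfe, hμI, MeasureTheory.integral_indicator measurableSet_Ioi,
        Measure.restrict_restrict measurableSet_Ioi, hIoi t ht,
        MeasureTheory.integral_const_mul, ← hFTC t (Set.Ioo_subset_Icc_self ht)]
      ring
    have step5 : ∀ u ∈ Set.Ioo α β, (∫ t, F (t, u) ∂μI) = D u * ZZ (u, ω) := by
      intro u hu
      have hfe : (fun t => F (t, u)) = fun t => (Set.Iio u).indicator
          (fun t => g t ω * D u) t := by
        funext t
        rw [hFdef]
        simp [Set.indicator_apply, Set.mem_Iio, Set.mem_setOf_eq]
      rw [hfe, hμI, MeasureTheory.integral_indicator measurableSet_Iio,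
        Measure.restrict_restrict measurableSet_Iio, hIio u hu,
        MeasureTheory.integral_mul_const, hZZ u hu.1.le ω,
        intervalIntegral.integral_of_le hu.1.le, MeasureTheory.integral_Ioc_eq_integral_Ioo]
      ring
    have swap : ∫ t, (∫ u, F (t, u) ∂μI) ∂μI = ∫ u, (∫ t, F (t, u) ∂μI) ∂μI :=
      MeasureTheory.integral_integral_swap hFint
    have e1 : ∫ t in Set.Ioo α β, (A β - A t) * g t ω = ∫ t, (∫ u, F (t, u) ∂μI) ∂μI :=
      setIntegral_congr_fun measurableSet_Ioo step3
    have e3 : ∫ u, (∫ t, F (t, u) ∂μI) ∂μI = ∫ u in Set.Ioo α β, D u * ZZ (u, ω) :=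
      setIntegral_congr_fun measurableSet_Ioo step5
    have h1 : ∫ t in Set.Ioo α β, (A β - A t) * g t ω =
        A β * (∫ t in Set.Ioo α β, g t ω) - ∫ t in Set.Ioo α β, A t * g t ω := by
      have hfe : (fun t => (A β - A t) * g t ω) = fun t => A β * g t ω - A t * g t ω := by
        funext t; ring
      rw [hfe, MeasureTheory.integral_sub (hcI.const_mul (A β)) hAc,
        MeasureTheory.integral_const_mul]
    have h2 : ∫ t in Set.Ioo α β, (A β - A t) * g t ω = ∫ u in Set.Ioo α β, D u * ZZ (u, ω) := by
      rw [e1, swap, e3]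
    rw [intervalIntegral.integral_of_le hαβ, intervalIntegral.integral_of_le hαβ,
      MeasureTheory.integral_Ioc_eq_integral_Ioo, MeasureTheory.integral_Ioc_eq_integral_Ioo]
    linarith [h1, h2]
  -- the pieces
  set ZB : Ω → ℝ := fun ω => r * ZZ (β, ω) with hZBdef
  set W : Ω → ℝ := fun ω => ∫ u in Set.Ioo α β, D u * (r * ZZ (u, ω)) with hWdef
  have heq : ∀ ω, r * (∫ t in α..β, A t * g t ω) = A β * ZB ω - W ω := by
    intro ω
    show r * (∫ t in α..β, A t * g t ω) =
      A β * (r * ZZ (β, ω)) - ∫ u in Set.Ioo α β, D u * (r * ZZ (u, ω))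
    have h2 : (∫ u in Set.Ioo α β, D u * (r * ZZ (u, ω)))
        = r * ∫ u in Set.Ioo α β, D u * ZZ (u, ω) := by
      rw [← MeasureTheory.integral_const_mul]
      exact MeasureTheory.integral_congr_ae (.of_forall fun u => by ring)
    rw [key ω, ← hZZ β hαβ ω, h2]
    ring
  set X : ℝ := (β - α) ^ p + ε ^ (((p : ℝ) - 1) / 2) with hXdef
  have hX0 : 0 ≤ X := by
    have h1 : (0:ℝ) ≤ ε ^ (((p : ℝ) - 1) / 2) := Real.rpow_nonneg hε.le _
    have h2 : (0:ℝ) ≤ (β - α)^p := pow_nonneg (by linarith) _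
    exact add_nonneg h2 h1
  set K : ℝ := r * (M * (β - α)) with hKdef
  have hK0 : 0 ≤ K := mul_nonneg hr0 (mul_nonneg hM0 (by linarith))
  have hZZm : Measurable ZZ := hZZsm.measurable
  have hrZZle : ∀ u ∈ Set.Icc α β, ∀ ω, |r * ZZ (u, ω)| ≤ K := by
    intro u hu ω
    rw [abs_mul, abs_of_nonneg hr0]
    exact mul_le_mul_of_nonneg_left (hZZb u hu ω) hr0
  set Q : Ω → ℝ := fun ω => ∫ u in Set.Ioo α β, (r * ZZ (u, ω)) ^ (2*p) ∂volume with hQdef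
  -- pointwise bound
  have h2e : (2 : ENNReal) = ENNReal.ofReal 2 := by norm_num
  have hpq22 : Real.HolderConjugate 2 2 := Real.HolderConjugate.two_two
  have hptw : ∀ ω, (A β * ZB ω - W ω) ^ (2*p) ≤
      2^(2*p) * (S^(2*p) * ZB ω ^(2*p) + NN^p * ((β-α)^(p-1) * Q ω)) := by
    intro ω
    set b : ℝ := ∫ u, (r * ZZ (u, ω)) ^ 2 ∂μI with hbdef
    have hb0 : 0 ≤ b := MeasureTheory.integral_nonneg fun u => sq_nonneg _
    have hZaesm : AEStronglyMeasurable (fun u => r * ZZ (u, ω)) μI :=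
      (measurable_const.mul (hZZm.comp (measurable_id.prodMk
        measurable_const))).aestronglyMeasurable
    have hZbd : ∀ᵐ u ∂μI, ‖r * ZZ (u, ω)‖ ≤ K := by
      rw [hμI]
      filter_upwards [ae_restrict_mem measurableSet_Ioo] with u hu
      rw [Real.norm_eq_abs]
      exact hrZZle u (Set.Ioo_subset_Icc_self hu) ω
    have hZmem2 : MemLp (fun u => r * ZZ (u, ω)) (ENNReal.ofReal 2) μI :=
      MemLp.of_bound hZaesm K hZbd
    have hDmem2 : MemLp D (ENNReal.ofReal 2) μI := by rw [← h2e]; exact hD2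
    have hCS := MeasureTheory.integral_mul_norm_le_Lp_mul_Lq (μ := μI) (f := D)
      (g := fun u => r * ZZ (u, ω)) hpq22 hDmem2 hZmem2
    have hDnorm : ∫ u, ‖D u‖ ^ (2:ℝ) ∂μI = NN := by
      rw [hNNdef]
      refine MeasureTheory.integral_congr_ae (.of_forall fun u => ?_)
      show ‖D u‖ ^ (2:ℝ) = D u ^ 2
      rw [Real.norm_eq_abs, show (2:ℝ) = ((2:ℕ):ℝ) by norm_num, Real.rpow_natCast, sq_abs]
    have hZnorm : ∫ u, ‖r * ZZ (u, ω)‖ ^ (2:ℝ) ∂μI = b := by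
      rw [hbdef]
      refine MeasureTheory.integral_congr_ae (.of_forall fun u => ?_)
      show ‖r * ZZ (u, ω)‖ ^ (2:ℝ) = (r * ZZ (u, ω)) ^ 2
      rw [Real.norm_eq_abs, show (2:ℝ) = ((2:ℕ):ℝ) by norm_num, Real.rpow_natCast, sq_abs]
    rw [hDnorm, hZnorm] at hCS
    have habs : |W ω| ≤ NN ^ ((1:ℝ)/2) * b ^ ((1:ℝ)/2) := by
      have h1 : |W ω| ≤ ∫ u, ‖D u * (r * ZZ (u, ω))‖ ∂μI := by
        rw [← Real.norm_eq_abs]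
        exact norm_integral_le_integral_norm _
      have h2 : ∫ u, ‖D u * (r * ZZ (u, ω))‖ ∂μI = ∫ u, ‖D u‖ * ‖r * ZZ (u, ω)‖ ∂μI :=
        MeasureTheory.integral_congr_ae (.of_forall fun u => norm_mul _ _)
      exact (h1.trans_eq h2).trans hCS
    have hWpow : W ω ^ (2*p) ≤ NN^p * b^p := by
      have he : (NN ^ ((1:ℝ)/2) * b ^ ((1:ℝ)/2)) ^ (2*p) = NN^p * b^p := by
        rw [pow_mul, mul_pow, ← Real.rpow_natCast (NN ^ ((1:ℝ)/2)) 2,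
          ← Real.rpow_natCast (b ^ ((1:ℝ)/2)) 2, ← Real.rpow_mul hNN0, ← Real.rpow_mul hb0]
        norm_num
        rw [mul_pow]
      calc W ω ^ (2*p) = |W ω| ^ (2*p) := by
            rw [← abs_pow, abs_of_nonneg ((even_two_mul p).pow_nonneg _)]
      _ ≤ (NN ^ ((1:ℝ)/2) * b ^ ((1:ℝ)/2)) ^ (2*p) := pow_le_pow_left₀ (abs_nonneg _) habs _
      _ = NN^p * b^p := he
    have hbp : b^p ≤ (β-α)^(p-1) * Q ω := by
      have hh := helper_holder μI (fun u => (r * ZZ (u, ω))^2)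
        (hZaesm.aemeasurable.pow_const 2).aestronglyMeasurable (K^2) ?_ (fun u => sq_nonneg _) p hp
      · rw [hμIuniv] at hh
        refine hh.trans ?_
        refine mul_le_mul_of_nonneg_left ?_ (pow_nonneg (by linarith) _)
        refine le_of_eq (MeasureTheory.integral_congr_ae (.of_forall fun u => ?_))
        exact (pow_mul _ 2 p).symm
      · filter_upwards [hZbd] with u hu
        rw [abs_pow, ← Real.norm_eq_abs]
        calc ‖r * ZZ (u, ω)‖^2 ≤ K^2 := pow_le_pow_left₀ (norm_nonneg _) hu _
        _ = K^2 := rfl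
    calc (A β * ZB ω - W ω) ^ (2*p)
        ≤ 2^(2*p) * ((A β * ZB ω)^(2*p) + W ω^(2*p)) := helper1 _ _ p
    _ ≤ 2^(2*p) * (S^(2*p) * ZB ω ^(2*p) + NN^p * ((β-α)^(p-1) * Q ω)) := by
        refine mul_le_mul_of_nonneg_left (add_le_add ?_ ?_) (by positivity)
        · rw [mul_pow]
          refine mul_le_mul_of_nonneg_right ?_ ((even_two_mul p).pow_nonneg _)
          calc (A β)^(2*p) = |A β|^(2*p) := by
                rw [← abs_pow, abs_of_nonneg ((even_two_mul p).pow_nonneg _)]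
          _ ≤ S^(2*p) := pow_le_pow_left₀ (abs_nonneg _) (hSle β ⟨hαβ, le_refl β⟩) _
        · exact hWpow.trans (mul_le_mul_of_nonneg_left hbp (pow_nonneg hNN0 _))
  -- integrability of the majorant pieces
  have hZBint : Integrable (fun ω => ZB ω ^ (2*p)) ℙ := by
    have hm : Measurable (fun ω => (r * ZZ (β, ω)) ^ (2*p)) :=
      (measurable_const.mul (hZZm.comp measurable_prodMk_left)).pow_const _
    refine MemLp.integrable le_rfl (MemLp.of_bound hm.aestronglyMeasurable (K^(2*p))
      (.of_forall fun ω => ?_))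
    rw [Real.norm_eq_abs, abs_pow]
    exact pow_le_pow_left₀ (abs_nonneg _) (hrZZle β ⟨hαβ, le_refl β⟩ ω) _
  have hQsm : StronglyMeasurable Q := by
    have hm : StronglyMeasurable (fun q : ℝ × Ω => (r * ZZ q) ^ (2*p)) :=
      ((measurable_const.mul hZZm).pow_const _).stronglyMeasurable
    exact hm.integral_prod_left'
  have hQ0 : ∀ ω, 0 ≤ Q ω := fun ω =>
    setIntegral_nonneg measurableSet_Ioo fun u _ => (even_two_mul p).pow_nonneg _
  have hQb : ∀ ω, Q ω ≤ (β - α) * K^(2*p) := by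
    intro ω
    have hint : IntegrableOn (fun u => (r * ZZ (u, ω)) ^ (2*p)) (Set.Ioo α β) volume := by
      refine MemLp.integrable le_rfl (MemLp.of_bound ?_ (K^(2*p)) ?_)
      · exact ((measurable_const.mul (hZZm.comp (measurable_id.prodMk
          measurable_const))).pow_const _).aestronglyMeasurable
      · filter_upwards [ae_restrict_mem measurableSet_Ioo] with u hu
        rw [Real.norm_eq_abs, abs_pow]
        exact pow_le_pow_left₀ (abs_nonneg _) (hrZZle u (Set.Ioo_subset_Icc_self hu) ω) _
    calc Q ω ≤ ∫ _ in Set.Ioo α β, K^(2*p) := by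
          refine setIntegral_mono_on hint ((integrableOn_const ?_))
            measurableSet_Ioo fun u hu => ?_
          · rw [Real.volume_Ioo]; exact ENNReal.ofReal_ne_top
          · have h1 : (r * ZZ (u, ω)) ^ (2*p) = |r * ZZ (u, ω)| ^ (2*p) := by
              rw [← abs_pow, abs_of_nonneg ((even_two_mul p).pow_nonneg _)]
            rw [h1]
            exact pow_le_pow_left₀ (abs_nonneg _) (hrZZle u (Set.Ioo_subset_Icc_self hu) ω) _
    _ = (β - α) * K^(2*p) := by
          rw [setIntegral_const, measureReal_def, Real.volume_Ioo, ENNReal.toReal_ofReal (by linarith),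
            smul_eq_mul]
  have hQint : Integrable Q ℙ := by
    refine MemLp.integrable le_rfl (MemLp.of_bound hQsm.aestronglyMeasurable ((β-α)*K^(2*p)) ?_)
    filter_upwards with ω
    rw [Real.norm_eq_abs, abs_of_nonneg (hQ0 ω)]
    exact hQb ω
  -- expectations
  have hEZB : ∫ ω, ZB ω ^ (2*p) ≤ Cp * X := by
    have h := hmom β ⟨hαβ, le_refl β⟩
    have he : ∫ ω, ZB ω ^ (2*p) = ∫ ω, (r * ∫ s in α..β, g s ω) ^ (2*p) := by
      refine MeasureTheory.integral_congr_ae (.of_forall fun ω => ?_)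
      show (r * ZZ (β, ω)) ^ (2*p) = _
      rw [hZZ β hαβ ω]
    rw [he]
    exact h
  have hEQ : ∫ ω, Q ω ≤ (β - α) * (Cp * X) := by
    have hfm : Measurable (fun q : Ω × ℝ => (r * ZZ (q.2, q.1)) ^ (2*p)) :=
      (measurable_const.mul (hZZm.comp (measurable_snd.prodMk measurable_fst))).pow_const _
    have hae : ∀ᵐ q ∂((ℙ : Measure Ω).prod μI), q.2 ∈ Set.Ioo α β := by
      rw [ae_iff]
      have hset : {q : Ω × ℝ | ¬ q.2 ∈ Set.Ioo α β} = Set.univ ×ˢ (Set.Ioo α β)ᶜ := by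
        ext q; simp
      rw [hset, Measure.prod_prod]
      have h0 : μI (Set.Ioo α β)ᶜ = 0 := by
        rw [hμI, Measure.restrict_apply measurableSet_Ioo.compl]
        simp
      rw [h0, mul_zero]
    have hint : Integrable (fun q : Ω × ℝ => (r * ZZ (q.2, q.1)) ^ (2*p)) ((ℙ : Measure Ω).prod μI) := by
      refine MemLp.integrable le_rfl (MemLp.of_bound hfm.aestronglyMeasurable (K^(2*p)) ?_)
      filter_upwards [hae] with q hq
      rw [Real.norm_eq_abs, abs_pow]
      exact pow_le_pow_left₀ (abs_nonneg _) (hrZZle q.2 (Set.Ioo_subset_Icc_self hq) q.1) _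
    have hswap : ∫ ω, (∫ u, (r * ZZ (u, ω)) ^ (2*p) ∂μI) ∂ℙ
        = ∫ u, (∫ ω, (r * ZZ (u, ω)) ^ (2*p) ∂ℙ) ∂μI :=
      MeasureTheory.integral_integral_swap hint
    have hQe : ∫ ω, Q ω = ∫ ω, (∫ u, (r * ZZ (u, ω)) ^ (2*p) ∂μI) ∂ℙ := rfl
    rw [hQe, hswap]
    have hIOn : IntegrableOn (fun u => ∫ ω, (r * ZZ (u, ω)) ^ (2*p) ∂ℙ) (Set.Ioo α β) volume :=
      hint.swap.integral_prod_left
    calc ∫ u, (∫ ω, (r * ZZ (u, ω)) ^ (2*p) ∂ℙ) ∂μI ≤ ∫ _ in Set.Ioo α β, Cp * X := by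
          refine setIntegral_mono_on hIOn ((integrableOn_const ?_))
            measurableSet_Ioo fun u hu => ?_
          · rw [Real.volume_Ioo]; exact ENNReal.ofReal_ne_top
          · have he : ∫ ω, (r * ZZ (u, ω)) ^ (2*p) ∂ℙ
                = ∫ ω, (r * ∫ s in α..u, g s ω) ^ (2*p) ∂ℙ := by
              refine MeasureTheory.integral_congr_ae (.of_forall fun ω => ?_)
              show (r * ZZ (u, ω)) ^ (2*p) = (r * ∫ s in α..u, g s ω) ^ (2*p)
              rw [hZZ u hu.1.le ω]
            rw [he]
            refine (hmom u (Set.Ioo_subset_Icc_self hu)).trans ?_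
            refine mul_le_mul_of_nonneg_left (add_le_add_left ?_ _) hCp
            exact pow_le_pow_left₀ (by linarith [hu.1]) (by linarith [hu.2]) p
    _ = (β - α) * (Cp * X) := by
          rw [setIntegral_const, measureReal_def, Real.volume_Ioo, ENNReal.toReal_ofReal (by linarith),
            smul_eq_mul]
  -- put it together
  calc ∫ ω, (r * ∫ t in α..β, A t * g t ω) ^ (2 * p)
      = ∫ ω, (A β * ZB ω - W ω) ^ (2*p) := by
        exact MeasureTheory.integral_congr_ae (.of_forall fun ω => congrArg (· ^ (2*p)) (heq ω))
  _ ≤ ∫ ω, 2^(2*p) * (S^(2*p) * ZB ω ^(2*p) + NN^p * ((β-α)^(p-1) * Q ω)) := by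
        refine MeasureTheory.integral_mono_of_nonneg (.of_forall fun ω => (even_two_mul p).pow_nonneg _)
          ?_ (.of_forall hptw)
        exact (((hZBint.const_mul _).add ((hQint.const_mul _).const_mul _)).const_mul _)
  _ = 2^(2*p) * (S^(2*p) * ∫ ω, ZB ω ^(2*p)) + 2^(2*p) * (NN^p * ((β-α)^(p-1) * ∫ ω, Q ω)) := by
        rw [MeasureTheory.integral_const_mul, MeasureTheory.integral_add (hZBint.const_mul _) ((hQint.const_mul _).const_mul _),
          MeasureTheory.integral_const_mul, MeasureTheory.integral_const_mul, MeasureTheory.integral_const_mul, mul_add]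
  _ ≤ 2^(2*p) * (S^(2*p) * (Cp * X)) + 2^(2*p) * (NN^p * ((β-α)^(p-1) * ((β - α) * (Cp * X)))) := by
        refine add_le_add ?_ ?_
        · exact mul_le_mul_of_nonneg_left (mul_le_mul_of_nonneg_left hEZB (pow_nonneg hS0 _))
            (by positivity)
        · exact mul_le_mul_of_nonneg_left (mul_le_mul_of_nonneg_left
            (mul_le_mul_of_nonneg_left hEQ (pow_nonneg (by linarith : (0:ℝ) ≤ β - α) _))
            (pow_nonneg hNN0 _)) (by positivity)
  _ ≤ 2^(2*p) * (Cp + 1) * X * (S ^ (2 * p) + (β - α) ^ p * NN ^ p) := by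
        have hba : (β-α)^(p-1) * (β - α) = (β - α)^p := by
          rw [← pow_succ, Nat.sub_add_cancel hp]
        have hX' : Cp * X ≤ (Cp + 1) * X := by nlinarith
        have hc2 : (0:ℝ) ≤ 2^(2*p) := by positivity
        have hsum0 : (0:ℝ) ≤ S^(2*p) + (β-α)^p * NN^p :=
          add_nonneg (pow_nonneg hS0 _)
            (mul_nonneg (pow_nonneg (by linarith) _) (pow_nonneg hNN0 _))
        calc 2^(2*p) * (S^(2*p) * (Cp * X))
              + 2^(2*p) * (NN^p * ((β-α)^(p-1) * ((β - α) * (Cp * X))))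
            = (Cp * X) * (2^(2*p) * (S^(2*p) + (β-α)^p * NN^p)) := by rw [← hba]; ring
        _ ≤ ((Cp + 1) * X) * (2^(2*p) * (S^(2*p) + (β-α)^p * NN^p)) :=
            mul_le_mul_of_nonneg_right hX' (mul_nonneg hc2 hsum0)
        _ = 2^(2*p) * (Cp + 1) * X * (S ^ (2 * p) + (β - α) ^ p * NN ^ p) := by ring
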